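/- Under the contextual-bandit off-policy setup, the bias of the weighted inverse-propensity estimator satisfies the Cauchy–Schwarz bound: | E_{β*}[ (π(a|x)/β̂(a|x)) φ(x,a) r(x,a) ] − V(π) | ≤ sqrt( E_{β*}[ (π(a|x)/β*(a|x))² r(x,a)² ] ) · sqrt( E_{β*}[ ( (β*(a|x)/β̂(a|x)) φ(x,a) − 1 )² ] ). -/

import Mathlib

open MeasureTheory

private lemma abs_mul_le_half_sq_add_sq (a b : ℝ) : |a| * |b| ≤ (a ^ 2 + b ^ 2) / 2 := by
  nlinarith [sq_abs a, sq_abs b, sq_nonneg (|a| - |b|)]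

/-- Cauchy–Schwarz bound on the bias of the weighted inverse-propensity estimator:
`|E_{β*}[(π/β̂)φ r] − V(π)| ≤ √(E_{β*}[(π/β*)² r²]) · √(E_{β*}[((β*/β̂)φ − 1)²])`,
where `E_{β*}[h] = ∫_X Σ_a β*(a|x) h(x,a) dp(x)` and `V(π) = ∫_X Σ_a π(a|x) r(x,a) dp(x)`. -/
theorem stmt_3
    {X : Type*} [MeasurableSpace X] (p : Measure X) [IsProbabilityMeasure p]
    {A : Type*} [Fintype A] [Nonempty A] [MeasurableSpace A] [MeasurableSingletonClass A]
    (pol bstar bhat : X → A → ℝ)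
    (hpol_meas : ∀ a, Measurable fun x => pol x a)
    (hbstar_meas : ∀ a, Measurable fun x => bstar x a)
    (hbhat_meas : ∀ a, Measurable fun x => bhat x a)
    (hpol_sum : ∀ x, ∑ a, pol x a = 1)
    (hbstar_sum : ∀ x, ∑ a, bstar x a = 1)
    (hbhat_sum : ∀ x, ∑ a, bhat x a = 1)
    (hpol_nonneg : ∀ x a, 0 ≤ pol x a)
    (hbstar_pos : ∀ x a, 0 < bstar x a)
    (hbhat_pos : ∀ x a, 0 < bhat x a)
    (r : X × A → ℝ) (hr_meas : Measurable r)
    (hr0 : ∀ z, 0 ≤ r z) (hr1 : ∀ z, r z ≤ 1)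
    (φ : X × A → ℝ) (hφ_meas : Measurable φ)
    (μ : Measure (X × A)) [IsProbabilityMeasure μ]
    (hμ : ∀ g : X × A → ℝ, Integrable g μ →
      ∫ z, g z ∂μ = ∫ x, ∑ a, bstar x a * g (x, a) ∂p)
    (hL2a : MemLp (fun z : X × A => pol z.1 z.2 / bstar z.1 z.2 * r z) 2 μ)
    (hL2b : MemLp (fun z : X × A => bstar z.1 z.2 / bhat z.1 z.2 * φ z - 1) 2 μ) :
    |(∫ x, ∑ a, bstar x a * (pol x a / bhat x a * φ (x, a) * r (x, a)) ∂p)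
        - (∫ x, ∑ a, pol x a * r (x, a) ∂p)|
      ≤ Real.sqrt (∫ x, ∑ a, bstar x a * ((pol x a / bstar x a) ^ 2 * r (x, a) ^ 2) ∂p)
          * Real.sqrt
              (∫ x, ∑ a, bstar x a * (bstar x a / bhat x a * φ (x, a) - 1) ^ 2 ∂p) := by
  set f : X × A → ℝ := fun z => pol z.1 z.2 / bstar z.1 z.2 * r z with hf_def
  set g : X × A → ℝ := fun z => bstar z.1 z.2 / bhat z.1 z.2 * φ z - 1 with hg_def
  have hf2 : Integrable (fun z => f z ^ 2) μ :=
    (memLp_two_iff_integrable_sq hL2a.1).1 hL2a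
  have hg2 : Integrable (fun z => g z ^ 2) μ :=
    (memLp_two_iff_integrable_sq hL2b.1).1 hL2b
  have hf1 : Integrable f μ := hL2a.integrable (by norm_num)
  have hfg : Integrable (fun z => f z * g z) μ := by
    refine Integrable.mono' ((hf2.add hg2).div_const 2) (hL2a.1.mul hL2b.1) ?_
    filter_upwards with z
    rw [Real.norm_eq_abs, abs_mul]
    simp only [Pi.add_apply]
    exact abs_mul_le_half_sq_add_sq (f z) (g z)
  -- rewrite the p-integrals as μ-integrals
  have e1 : (∫ x, ∑ a, bstar x a * (pol x a / bhat x a * φ (x, a) * r (x, a)) ∂p)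
      = ∫ z, (f z * g z + f z) ∂μ := by
    rw [hμ (fun z => f z * g z + f z) (hfg.add hf1)]
    refine integral_congr_ae (Filter.Eventually.of_forall fun x => ?_)
    refine Finset.sum_congr rfl fun a _ => ?_
    have hb := (hbstar_pos x a).ne'
    have hh := (hbhat_pos x a).ne'
    simp only [hf_def, hg_def]
    field_simp
    ring
  have e2 : (∫ x, ∑ a, pol x a * r (x, a) ∂p) = ∫ z, f z ∂μ := by
    rw [hμ _ hf1]
    refine integral_congr_ae (Filter.Eventually.of_forall fun x => ?_)
    refine Finset.sum_congr rfl fun a _ => ?_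
    have hb := (hbstar_pos x a).ne'
    simp only [hf_def]
    field_simp
  have e3 : (∫ x, ∑ a, bstar x a * ((pol x a / bstar x a) ^ 2 * r (x, a) ^ 2) ∂p)
      = ∫ z, f z ^ 2 ∂μ := by
    rw [hμ _ hf2]
    refine integral_congr_ae (Filter.Eventually.of_forall fun x => ?_)
    refine Finset.sum_congr rfl fun a _ => ?_
    simp only [hf_def]
    ring
  have e4 : (∫ x, ∑ a, bstar x a * (bstar x a / bhat x a * φ (x, a) - 1) ^ 2 ∂p)
      = ∫ z, g z ^ 2 ∂μ := by
    rw [hμ _ hg2]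
  rw [e1, e2, e3, e4, integral_add hfg hf1, add_sub_cancel_right]
  -- Cauchy–Schwarz
  have hpq : Real.HolderConjugate 2 2 := Real.holderConjugate_iff.2 ⟨one_lt_two, by norm_num⟩
  have h2 : (ENNReal.ofReal 2) = 2 := by norm_num
  have habs : ∀ h : X × A → ℝ, MemLp h 2 μ → MemLp (fun z => |h z|) (ENNReal.ofReal 2) μ := by
    intro h hh
    rw [h2]
    simpa [Real.norm_eq_abs] using hh.norm
  have key : ∫ z, |f z| * |g z| ∂μ
      ≤ (∫ z, |f z| ^ (2 : ℝ) ∂μ) ^ ((1 : ℝ) / 2) * (∫ z, |g z| ^ (2 : ℝ) ∂μ) ^ ((1 : ℝ) / 2) :=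
    integral_mul_le_Lp_mul_Lq_of_nonneg hpq
      (Filter.Eventually.of_forall fun z => abs_nonneg _)
      (Filter.Eventually.of_forall fun z => abs_nonneg _)
      (habs f hL2a) (habs g hL2b)
  have hsq : ∀ h : X × A → ℝ, (fun z => |h z| ^ (2 : ℝ)) = fun z => h z ^ 2 := by
    intro h
    funext z
    rw [show ((2 : ℝ)) = ((2 : ℕ) : ℝ) by norm_num, Real.rpow_natCast, sq_abs]
  rw [hsq f, hsq g] at key
  calc |∫ z, f z * g z ∂μ| ≤ ∫ z, |f z| * |g z| ∂μ := by
        simpa [Real.norm_eq_abs, abs_mul] using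
          norm_integral_le_integral_norm (μ := μ) (fun z => f z * g z)
    _ ≤ (∫ z, f z ^ 2 ∂μ) ^ ((1 : ℝ) / 2) * (∫ z, g z ^ 2 ∂μ) ^ ((1 : ℝ) / 2) := key
    _ = Real.sqrt (∫ z, f z ^ 2 ∂μ) * Real.sqrt (∫ z, g z ^ 2 ∂μ) := by
        rw [Real.sqrt_eq_rpow, Real.sqrt_eq_rpow]
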